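/- Let X be a finite type and f : X → X with ≤f antisymmetric, and let root f n denote the unique fixed point reachable from n by iterating f. Then for all n m : X, root f n = root f m if and only if n ≡f m (i.e., there exists k with n ≤f k and m ≤f k). -/
import Mathlib


def lef {X : Type*} (f : X → X) (n m : X) : Prop :=
  Relation.ReflTransGen (fun a b => b = f a) n m

def eqf {X : Type*} (f : X → X) (n m : X) : Prop :=
  ∃ k, lef f n k ∧ lef f m k

lemma lef_iff_iter {X : Type*} (f : X → X) (n m : X) :
    lef f n m ↔ ∃ k, m = f^[k] n := by
  constructor
  · intro h
    induction h with
    | refl => exact ⟨0, rfl⟩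
    | tail _ hbc ih =>
      obtain ⟨k, hk⟩ := ih
      exact ⟨k + 1, by simp [hbc, hk, Function.iterate_succ_apply']⟩
  · rintro ⟨k, rfl⟩
    induction k with
    | zero => exact Relation.ReflTransGen.refl
    | succ k ih =>
      exact ih.tail (by simp [Function.iterate_succ_apply'])

lemma lef_to_fixed {X : Type*} (f : X → X) {n a r : X}
    (ha : lef f n a) (hr : lef f n r) (hfix : f r = r) : lef f a r := by
  rw [lef_iff_iter] at ha hr ⊢
  obtain ⟨i, rfl⟩ := ha
  obtain ⟨j, rfl⟩ := hr
  rcases le_or_gt i j with h | h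
  · exact ⟨j - i, by rw [← Function.iterate_add_apply, Nat.sub_add_cancel h]⟩
  · refine ⟨0, ?_⟩
    have : f^[i] n = f^[i - j] (f^[j] n) := by
      rw [← Function.iterate_add_apply, Nat.sub_add_cancel h.le]
    rw [this, Function.iterate_fixed hfix]
    rfl

theorem stmt_7 {X : Type*} [Fintype X] (f : X → X)
    (antisym : ∀ n m : X, lef f n m → lef f m n → n = m)
    (root : X → X)
    (hroot : ∀ n, lef f n (root n) ∧ f (root n) = root n) :
    ∀ n m : X, root n = root m ↔ eqf f n m := by
  have key : ∀ n k : X, lef f n k → root n = root k := by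
    intro n k hnk
    have h1 : lef f k (root n) :=
      lef_to_fixed f hnk (hroot n).1 (hroot n).2
    have h2 : lef f (root k) (root n) :=
      lef_to_fixed f (hroot k).1 h1 (hroot n).2
    have h3 : lef f (root n) (root k) :=
      lef_to_fixed f h1 (hroot k).1 (hroot k).2
    exact antisym _ _ h3 h2
  intro n m
  constructor
  · intro h
    exact ⟨root n, (hroot n).1, h ▸ (hroot m).1⟩
  · rintro ⟨k, hn, hm⟩
    rw [key n k hn, key m k hm]
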